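/- Assume the genericity condition. Let x ∈ V with η x = 1 and η w = 0 for every nearest neighbour w of x, let y be a nearest neighbour of x (|y − x|₁ = 1), and let z be a nearest neighbour of y with z ≠ x and η z ≥ 1. Suppose all four nearest neighbours of x and all four nearest neighbours of y lie in V. Then the configuration η' obtained by moving the particle from x to y (η' x = 0, η' y = 1, η' = η elsewhere) does not preserve the interaction energy: H⁰ᵢ(η') ≠ H⁰ᵢ(η). In other words, under the resonant dynamics a lone particle cannot hop onto a site adjacent to another particle: two particles can never come to distance at most 1 from each other. -/

import Mathlib

open Finset
open Fin.NatCast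

/-- First lattice unit vector of `ℤ²`. -/
def e1 : ℤ × ℤ := (1, 0)

/-- Second lattice unit vector of `ℤ²`. -/
def e2 : ℤ × ℤ := (0, 1)

/-- The `ℓ¹` distance on `ℤ²`. -/
def dist1 (x y : ℤ × ℤ) : ℕ :=
  (x.1 - y.1).natAbs + (x.2 - y.2).natAbs

/-- Interaction energy `H⁰ᵢ(η) = Σ_{x : x, x+e₁ ∈ V} f₁(η x, η (x+e₁))
+ Σ_{x : x, x+e₂ ∈ V} f₂(η x, η (x+e₂))`. -/
noncomputable def interactionEnergy (f1 f2 : ℕ → ℕ → ℝ) (V : Finset (ℤ × ℤ))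
    (η : ℤ × ℤ → ℕ) : ℝ :=
  ∑ x ∈ V.filter (fun x => x + e1 ∈ V), f1 (η x) (η (x + e1)) +
  ∑ x ∈ V.filter (fun x => x + e2 ∈ V), f2 (η x) (η (x + e2))

/-- Genericity condition: the `2(N+1)²` real numbers `f₁(a,b), f₂(a,b)` for
`(a,b) ∈ {0,…,N}²` are linearly independent over `ℚ`. -/
def Generic (N : ℕ) (f1 f2 : ℕ → ℕ → ℝ) : Prop :=
  LinearIndependent ℚ (fun p : Fin 2 × Fin (N + 1) × Fin (N + 1) =>
    if p.1 = 0 then f1 p.2.1 p.2.2 else f2 p.2.1 p.2.2)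

lemma fin_cast_inj {N a b : ℕ} (ha : a ≤ N) (hb : b ≤ N)
    (h : (a : Fin (N+1)) = (b : Fin (N+1))) : a = b := by
  have := congrArg Fin.val h
  rwa [Fin.val_cast_of_lt (Nat.lt_succ_of_le ha), Fin.val_cast_of_lt (Nat.lt_succ_of_le hb)] at this

def cnt (N : ℕ) (V : Finset (ℤ × ℤ)) (e : ℤ × ℤ) (η0 : ℤ × ℤ → ℕ)
    (q : Fin (N+1) × Fin (N+1)) : ℕ :=
  (V.filter (fun w => w + e ∈ V ∧ (η0 w : Fin (N+1)) = q.1 ∧ (η0 (w+e) : Fin (N+1)) = q.2)).card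

lemma sum_cnt (N : ℕ) (f : ℕ → ℕ → ℝ) (V : Finset (ℤ × ℤ)) (e : ℤ × ℤ)
    (η0 : ℤ × ℤ → ℕ) (hη : ∀ w, η0 w ≤ N) :
    ∑ q : Fin (N+1) × Fin (N+1), (cnt N V e η0 q : ℚ) • f q.1 q.2
      = ∑ w ∈ V.filter (fun w => w + e ∈ V), f (η0 w) (η0 (w + e)) := by
  rw [← Finset.sum_fiberwise (V.filter (fun w => w + e ∈ V))
    (fun w => (((η0 w : Fin (N+1)), (η0 (w+e) : Fin (N+1))) : Fin (N+1) × Fin (N+1)))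
    (fun w => f (η0 w) (η0 (w + e)))]
  refine Finset.sum_congr rfl fun q _ => ?_
  have hset : (V.filter (fun w => w + e ∈ V)).filter
      (fun w => (((η0 w : Fin (N+1)), (η0 (w+e) : Fin (N+1))) : Fin (N+1) × Fin (N+1)) = q)
      = V.filter (fun w => w + e ∈ V ∧ (η0 w : Fin (N+1)) = q.1 ∧ (η0 (w+e) : Fin (N+1)) = q.2) := by
    rw [Finset.filter_filter]
    exact Finset.filter_congr fun w _ => by simp [Prod.ext_iff, and_assoc]
  rw [hset]
  have hconst : ∀ w ∈ V.filter (fun w => w + e ∈ V ∧ (η0 w : Fin (N+1)) = q.1 ∧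
      (η0 (w+e) : Fin (N+1)) = q.2), f (η0 w) (η0 (w + e)) = f q.1 q.2 := by
    intro w hw
    simp only [Finset.mem_filter] at hw
    obtain ⟨_, _, h1, h2⟩ := hw
    have e1 : η0 w = (q.1 : ℕ) := by
      have := congrArg Fin.val h1
      rwa [Fin.val_cast_of_lt (Nat.lt_succ_of_le (hη w))] at this
    have e2 : η0 (w + e) = (q.2 : ℕ) := by
      have := congrArg Fin.val h2
      rwa [Fin.val_cast_of_lt (Nat.lt_succ_of_le (hη _))] at this
    rw [e1, e2]
  rw [Finset.sum_congr rfl hconst, Finset.sum_const, cnt]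
  simp [nsmul_eq_mul, Rat.smul_def]

lemma dist1_comm (a b : ℤ × ℤ) : dist1 a b = dist1 b a := by
  unfold dist1; omega

/-- Strict count inequality at the pattern of the `y`–`z` bond. -/
lemma cnt_strict (N : ℕ) (hN : 1 ≤ N) (V : Finset (ℤ × ℤ)) (x y z : ℤ × ℤ)
    (e : ℤ × ℤ) (he : ∀ w : ℤ × ℤ, dist1 (w + e) w = 1)
    (hnbx : ∀ w : ℤ × ℤ, dist1 w x = 1 → w ∈ V)
    (hnby : ∀ w : ℤ × ℤ, dist1 w y = 1 → w ∈ V)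
    (hxy : dist1 y x = 1) (hyz : dist1 z y = 1) (hzx : z ≠ x)
    (η η' : ℤ × ℤ → ℕ) (hη : ∀ w, η w ≤ N)
    (hx1 : η x = 1) (hempty : ∀ w : ℤ × ℤ, dist1 w x = 1 → η w = 0)
    (hz1 : 1 ≤ η z)
    (h'x : η' x = 0) (h'y : η' y = 1)
    (h' : ∀ w, w ≠ x → w ≠ y → η' w = η w)
    (w₀ : ℤ × ℤ) (hbond : (w₀ = y ∧ w₀ + e = z) ∨ (w₀ = z ∧ w₀ + e = y)) :
    cnt N V e η ((η' w₀ : Fin (N+1)), (η' (w₀ + e) : Fin (N+1)))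
      < cnt N V e η' ((η' w₀ : Fin (N+1)), (η' (w₀ + e) : Fin (N+1))) := by
  have hyV : y ∈ V := hnbx y hxy
  have hzV : z ∈ V := hnby z hyz
  have hzy : z ≠ y := by
    intro h; rw [h] at hyz; unfold dist1 at hyz; omega
  have hηy : η y = 0 := hempty y hxy
  have h'z : η' z = η z := h' z hzx hzy
  -- bounds and positivity of the pattern
  have ha1 : 1 ≤ η' w₀ := by
    rcases hbond with ⟨h1, _⟩ | ⟨h1, _⟩
    · rw [h1, h'y]
    · rw [h1, h'z]; exact hz1
  have hb1 : 1 ≤ η' (w₀ + e) := by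
    rcases hbond with ⟨_, h2⟩ | ⟨_, h2⟩
    · rw [h2, h'z]; exact hz1
    · rw [h2, h'y]
  have haN : η' w₀ ≤ N := by
    rcases hbond with ⟨h1, _⟩ | ⟨h1, _⟩
    · rw [h1, h'y]; exact hN
    · rw [h1, h'z]; exact hη z
  have hbN : η' (w₀ + e) ≤ N := by
    rcases hbond with ⟨_, h2⟩ | ⟨_, h2⟩
    · rw [h2, h'z]; exact hη z
    · rw [h2, h'y]; exact hN
  apply Finset.card_lt_card
  rw [Finset.ssubset_iff_of_subset]
  · -- witness : w₀ in the η' set but not the η set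
    refine ⟨w₀, ?_, ?_⟩
    · refine Finset.mem_filter.mpr ⟨?_, ?_, rfl, rfl⟩
      · rcases hbond with ⟨h1, _⟩ | ⟨h1, _⟩ <;> rw [h1] <;> assumption
      · rcases hbond with ⟨_, h2⟩ | ⟨_, h2⟩ <;> rw [h2] <;> assumption
    · simp only [Finset.mem_filter, not_and]
      intro _ _
      rcases hbond with ⟨h1, _⟩ | ⟨_, h2⟩
      · intro hc
        have : η w₀ = η' w₀ := fin_cast_inj (hη _) haN hc
        rw [h1, hηy] at this
        omega
      · intro _ hc
        have : η (w₀ + e) = η' (w₀ + e) := fin_cast_inj (hη _) hbN hc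
        rw [h2, hηy] at this
        omega
  · -- subset
    intro w hw
    simp only [Finset.mem_filter] at hw ⊢
    obtain ⟨hwV, hweV, hp1, hp2⟩ := hw
    have hw1 : η w = η' w₀ := fin_cast_inj (hη _) haN hp1
    have hw2 : η (w + e) = η' (w₀ + e) := fin_cast_inj (hη _) hbN hp2
    have hwx : w ≠ x := by
      intro h
      have : dist1 (w + e) x = 1 := by rw [h]; exact he x
      have := hempty _ this
      omega
    have hwex : w + e ≠ x := by
      intro h
      have : dist1 w x = 1 := by rw [← h, dist1_comm]; exact he w
      have := hempty _ this
      omega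
    have hwy : w ≠ y := by
      intro h; rw [h, hηy] at hw1; omega
    have hwey : w + e ≠ y := by
      intro h; rw [h, hηy] at hw2; omega
    rw [h' w hwx hwy, h' (w + e) hwex hwey]
    exact ⟨hwV, hweV, hp1, hp2⟩

/-- **Two particles can never come to distance at most `1` under the resonant
dynamics.** Under the genericity condition, let `x ∈ V` carry a single particle
with all its nearest neighbours empty, let `y` be a nearest neighbour of `x`, and
let `z ≠ x` be a nearest neighbour of `y` carrying at least one particle; assume
all four nearest neighbours of `x` and of `y` lie in `V`. Then moving the
particle from `x` to `y` does not preserve the interaction energy. -/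
theorem no_resonant_hop_next_to_particle (N : ℕ) (hN : 1 ≤ N)
    (f1 f2 : ℕ → ℕ → ℝ) (hgen : Generic N f1 f2)
    (V : Finset (ℤ × ℤ)) (x y z : ℤ × ℤ) (hxV : x ∈ V)
    (hnbx : ∀ w : ℤ × ℤ, dist1 w x = 1 → w ∈ V)
    (hnby : ∀ w : ℤ × ℤ, dist1 w y = 1 → w ∈ V)
    (hxy : dist1 y x = 1) (hyz : dist1 z y = 1) (hzx : z ≠ x)
    (η η' : ℤ × ℤ → ℕ) (hη : ∀ w, η w ≤ N)
    (hx1 : η x = 1) (hempty : ∀ w : ℤ × ℤ, dist1 w x = 1 → η w = 0)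
    (hz1 : 1 ≤ η z)
    (h'x : η' x = 0) (h'y : η' y = 1)
    (h' : ∀ w, w ≠ x → w ≠ y → η' w = η w) :
    interactionEnergy f1 f2 V η' ≠ interactionEnergy f1 f2 V η := by
  intro heq
  have hη' : ∀ w, η' w ≤ N := by
    intro w
    by_cases h1 : w = x
    · rw [h1, h'x]; omega
    · by_cases h2 : w = y
      · rw [h2, h'y]; exact hN
      · rw [h' w h1 h2]; exact hη w
  have he1 : ∀ w : ℤ × ℤ, dist1 (w + e1) w = 1 := by intro w; simp [dist1, e1]
  have he2 : ∀ w : ℤ × ℤ, dist1 (w + e2) w = 1 := by intro w; simp [dist1, e2]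
  -- the coefficient function
  set g : Fin 2 × Fin (N + 1) × Fin (N + 1) → ℚ := fun p =>
    (cnt N V (if p.1 = 0 then e1 else e2) η' p.2 : ℚ)
      - (cnt N V (if p.1 = 0 then e1 else e2) η p.2 : ℚ) with hg
  have hsum : ∑ p : Fin 2 × Fin (N + 1) × Fin (N + 1),
      g p • (if p.1 = 0 then f1 p.2.1 p.2.2 else f2 p.2.1 p.2.2) = 0 := by
    have expand : ∀ η0 : ℤ × ℤ → ℕ, (∀ w, η0 w ≤ N) →
        ∑ p : Fin 2 × Fin (N + 1) × Fin (N + 1),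
          (cnt N V (if p.1 = 0 then e1 else e2) η0 p.2 : ℚ) •
            (if p.1 = 0 then f1 p.2.1 p.2.2 else f2 p.2.1 p.2.2)
        = interactionEnergy f1 f2 V η0 := by
      intro η0 hη0
      rw [Fintype.sum_prod_type, Fin.sum_univ_two]
      have h00 : ((0 : Fin 2) = 0) = True := by decide
      have h10 : ((1 : Fin 2) = 0) = False := by decide
      simp only [h00, h10, if_true, if_false]
      rw [sum_cnt N f1 V e1 η0 hη0, sum_cnt N f2 V e2 η0 hη0, interactionEnergy]
    simp only [hg, sub_smul, Finset.sum_sub_distrib]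
    rw [expand η' hη', expand η hη, heq, sub_self]
  have hzero := Fintype.linearIndependent_iff.mp hgen g hsum
  -- locate z relative to y and derive the contradiction
  have hcases : (z = y + e1) ∨ (y = z + e1) ∨ (z = y + e2) ∨ (y = z + e2) := by
    unfold dist1 at hyz
    have : (z.1 - y.1 = 1 ∧ z.2 = y.2) ∨ (z.1 - y.1 = -1 ∧ z.2 = y.2) ∨
        (z.1 = y.1 ∧ z.2 - y.2 = 1) ∨ (z.1 = y.1 ∧ z.2 - y.2 = -1) := by omega
    rcases this with ⟨h1, h2⟩ | ⟨h1, h2⟩ | ⟨h1, h2⟩ | ⟨h1, h2⟩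
    · left; exact Prod.ext (by simp [e1]; omega) (by simp [e1, h2])
    · right; left; exact Prod.ext (by simp [e1]; omega) (by simp [e1, h2])
    · right; right; left; exact Prod.ext (by simp [e2, h1]) (by simp [e2]; omega)
    · right; right; right; exact Prod.ext (by simp [e2, h1]) (by simp [e2]; omega)
  have key : ∀ (i : Fin 2) (w₀ : ℤ × ℤ),
      ((w₀ = y ∧ w₀ + (if i = 0 then e1 else e2) = z) ∨
       (w₀ = z ∧ w₀ + (if i = 0 then e1 else e2) = y)) → False := by
    intro i w₀ hbond
    set e := if i = 0 then e1 else e2 with hedef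
    have he : ∀ w : ℤ × ℤ, dist1 (w + e) w = 1 := by
      by_cases hi : i = 0
      · intro w; rw [hedef, if_pos hi]; exact he1 w
      · intro w; rw [hedef, if_neg hi]; exact he2 w
    have hlt := cnt_strict N hN V x y z e he hnbx hnby hxy hyz hzx η η' hη hx1 hempty hz1
      h'x h'y h' w₀ hbond
    have := hzero (i, ((η' w₀ : Fin (N+1)), (η' (w₀ + e) : Fin (N+1))))
    simp only [hg] at this
    rw [sub_eq_zero] at this
    have : cnt N V (if i = 0 then e1 else e2) η'
        (((η' w₀ : Fin (N+1)), (η' (w₀ + e) : Fin (N+1))))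
        = cnt N V (if i = 0 then e1 else e2) η
        (((η' w₀ : Fin (N+1)), (η' (w₀ + e) : Fin (N+1)))) := by
      exact_mod_cast this
    rw [← hedef] at this
    omega
  rcases hcases with h | h | h | h
  · exact key 0 y (Or.inl ⟨rfl, by simp [h]⟩)
  · exact key 0 z (Or.inr ⟨rfl, by simp [h]⟩)
  · exact key 1 y (Or.inl ⟨rfl, by simp [h]⟩)
  · exact key 1 z (Or.inr ⟨rfl, by simp [h]⟩)
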